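/- Let d ≥ 2 be an integer, G = (V,E) a finite d-claw free graph, w : V → ℝ positive, A* an independent set of maximum weight, and A an independent set such that no claw improves w²(A) (in particular A is maximal, so the charge map is defined). Then for each v ∈ A, ∑_{u∈A* : charge(u,v)>0} charge(u,v) ≤ w(v)/2. -/

import Mathlib

open Finset

open scoped Classical

variable {V : Type*}

noncomputable section

/-- Neighborhood of `U` in `W`: vertices of `W` that lie in `U` or are adjacent to some
vertex of `U`. -/
def nbhd (G : SimpleGraph V) (U W : Finset V) : Finset V :=
  W.filter (fun x => x ∈ U ∨ ∃ u ∈ U, G.Adj u x)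

/-- Neighborhood of a single vertex `u` in `W`. -/
def nbhd1 (G : SimpleGraph V) (u : V) (W : Finset V) : Finset V :=
  nbhd G {u} W

/-- Total weight of a finite set of vertices. -/
def wsum (w : V → ℝ) (U : Finset V) : ℝ := ∑ x ∈ U, w x

/-- Total squared weight of a finite set of vertices. -/
def wsq (w : V → ℝ) (U : Finset V) : ℝ := ∑ x ∈ U, (w x) ^ 2

/-- A finite set of vertices is independent. -/
def IsIndep (G : SimpleGraph V) (S : Finset V) : Prop :=
  ∀ a ∈ S, ∀ b ∈ S, a ≠ b → ¬ G.Adj a b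

/-- `G` is `d`-claw free: every independent subset of the neighborhood of any vertex has
size at most `d - 1`. -/
def ClawFree (G : SimpleGraph V) (d : ℕ) : Prop :=
  ∀ v : V, ∀ S : Finset V, (∀ x ∈ S, G.Adj v x) → IsIndep G S → S.card ≤ d - 1

/-- `X` is a local improvement of `w²(A)`. -/
def LocalImprovement (G : SimpleGraph V) (d : ℕ) (w : V → ℝ) (A X : Finset V) : Prop :=
  IsIndep G X ∧ X.card ≤ (d - 1) ^ 2 + (d - 1) ∧ wsq w (nbhd G X A) < wsq w X

/-- No claw improves `w²(A)`: `w²(T) ≤ w²(N(T,A))` for every independent set `T` that is a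
singleton or whose vertices are all adjacent to a common vertex. -/
def NoClawImproves (G : SimpleGraph V) (w : V → ℝ) (A : Finset V) : Prop :=
  ∀ T : Finset V, IsIndep G T → (T.card = 1 ∨ ∃ v : V, ∀ x ∈ T, G.Adj v x) →
    wsq w T ≤ wsq w (nbhd G T A)

/-- The charge map, relative to a choice `n` of heaviest neighbors. -/
def charge (G : SimpleGraph V) (w : V → ℝ) (A : Finset V) (n : V → V) (u v : V) : ℝ :=
  if v = n u then w u - wsum w (nbhd1 G u A) / 2 else 0

/-- `u ∈ T_v` is single (with `√ε = 1/2304`). -/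
def IsSingle (G : SimpleGraph V) (w : V → ℝ) (A : Finset V) (u v : V) : Prop :=
  (1 - 1 / 2304 : ℝ) ≤ w u / w v ∧ w u / w v ≤ 1 + 1 / 2304 ∧
  wsum w (nbhd1 G u A) ≤ (1 + 1 / 2304) * w v

/-- `u ∈ T_v` is double (with `√ε = 1/2304`). -/
def IsDouble (G : SimpleGraph V) (w : V → ℝ) (A : Finset V) (u v : V) : Prop :=
  2 ≤ (nbhd1 G u A).card ∧
  ∃ v₂ ∈ (nbhd1 G u A).erase v, (∀ x ∈ (nbhd1 G u A).erase v, w x ≤ w v₂) ∧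
    (1 - 1 / 2304 : ℝ) ≤ w u / w v ∧ w u / w v ≤ 1 + 1 / 2304 ∧
    (1 - 1 / 2304 : ℝ) ≤ w v₂ / w v ∧ w v₂ / w v ≤ 1 ∧
    (2 - 1 / 2304) * w v ≤ wsum w (nbhd1 G u A) ∧ wsum w (nbhd1 G u A) < 2 * w u

/-- The contribution map. -/
def contr (G : SimpleGraph V) (w : V → ℝ) (A : Finset V) (u v : V) : ℝ :=
  if v ∈ nbhd1 G u A then max 0 (((w u) ^ 2 - wsq w ((nbhd1 G u A).erase v)) / w v) else 0

lemma wsq_nonneg (w : V → ℝ) (S : Finset V) : 0 ≤ wsq w S :=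
  Finset.sum_nonneg fun _ _ => sq_nonneg _

lemma wsq_mono (w : V → ℝ) {S1 S2 : Finset V} (h : S1 ⊆ S2) : wsq w S1 ≤ wsq w S2 :=
  Finset.sum_le_sum_of_subset_of_nonneg h fun x _ _ => sq_nonneg _

lemma wsq_union_le (w : V → ℝ) (S1 S2 : Finset V) :
    wsq w (S1 ∪ S2) ≤ wsq w S1 + wsq w S2 := by
  have h : wsq w (S1 ∪ S2) + wsq w (S1 ∩ S2) = wsq w S1 + wsq w S2 :=
    Finset.sum_union_inter
  have h2 := wsq_nonneg w (S1 ∩ S2)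
  linarith

lemma wsq_biUnion_le (w : V → ℝ) (T : Finset V) (f : V → Finset V) :
    wsq w (T.biUnion f) ≤ ∑ u ∈ T, wsq w (f u) := by
  induction T using Finset.induction_on with
  | empty => simp [wsq]
  | @insert a s hx ih =>
    rw [Finset.biUnion_insert, Finset.sum_insert hx]
    exact (wsq_union_le w _ _).trans (by linarith)

lemma mem_nbhd1 (G : SimpleGraph V) (u : V) (A : Finset V) (x : V) :
    x ∈ nbhd1 G u A ↔ x ∈ A ∧ (x = u ∨ G.Adj u x) := by
  simp [nbhd1, nbhd, Finset.mem_filter]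

theorem stmt5 [Fintype V] (G : SimpleGraph V) (d : ℕ) (hd : 2 ≤ d) (hG : ClawFree G d)
    (w : V → ℝ) (hw : ∀ v, 0 < w v) (Astar A : Finset V)
    (hAstarIndep : IsIndep G Astar)
    (hAstarMax : ∀ S : Finset V, IsIndep G S → wsum w S ≤ wsum w Astar)
    (hAIndep : IsIndep G A) (hAmax : ∀ v : V, (nbhd1 G v A).Nonempty)
    (hNoClaw : NoClawImproves G w A)
    (n : V → V)
    (hn : ∀ u ∈ Astar, n u ∈ nbhd1 G u A ∧ ∀ x ∈ nbhd1 G u A, w x ≤ w (n u)) :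
    ∀ v ∈ A, ∑ u ∈ Astar.filter (fun u => 0 < charge G w A n u v), charge G w A n u v
      ≤ w v / 2 := by
  intro v hv
  set T := Astar.filter (fun u => 0 < charge G w A n u v) with hTdef
  have hTsub : T ⊆ Astar := Finset.filter_subset _ _
  have hTindep : IsIndep G T := fun a ha b hb hab =>
    hAstarIndep a (hTsub ha) b (hTsub hb) hab
  have hnv : ∀ u ∈ T, v = n u := by
    intro u hu
    have hpos := (Finset.mem_filter.mp hu).2
    by_contra h
    rw [charge, if_neg h] at hpos
    exact lt_irrefl 0 hpos
  have hvN : ∀ u ∈ T, v ∈ nbhd1 G u A := fun u hu =>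
    (hnv u hu) ▸ (hn u (hTsub hu)).1
  have hmax : ∀ u ∈ T, ∀ x ∈ nbhd1 G u A, w x ≤ w v := by
    intro u hu x hx
    rw [hnv u hu]
    exact (hn u (hTsub hu)).2 x hx
  have hadjT : ∀ u ∈ T, u ≠ v → G.Adj v u := by
    intro u hu hne
    rcases (mem_nbhd1 G u A v).mp (hvN u hu) with ⟨_, h | h⟩
    · exact absurd h.symm hne
    · exact h.symm
  have hclaw : T.card = 1 ∨ ∃ c, ∀ x ∈ T, G.Adj c x := by
    by_cases hvT : v ∈ T
    · left
      have hTeq : T = {v} := by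
        apply Finset.eq_singleton_iff_unique_mem.mpr
        refine ⟨hvT, fun u hu => ?_⟩
        by_contra hne
        exact hAstarIndep u (hTsub hu) v (hTsub hvT) hne ((hadjT u hu hne).symm)
      rw [hTeq]; simp
    · right
      exact ⟨v, fun u hu => hadjT u hu (fun h => hvT (h ▸ hu))⟩
  have h1 : wsq w T ≤ wsq w (nbhd G T A) := hNoClaw T hTindep hclaw
  -- cover the neighborhood
  have hsub : nbhd G T A ⊆ insert v (T.biUnion fun u => (nbhd1 G u A).erase v) := by
    intro x hx
    rw [nbhd, Finset.mem_filter] at hx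
    obtain ⟨hxA, hx2⟩ := hx
    by_cases hxv : x = v
    · simp [hxv]
    · rw [Finset.mem_insert, Finset.mem_biUnion]
      right
      rcases hx2 with hxT | ⟨u, huT, hadj⟩
      · exact ⟨x, hxT, Finset.mem_erase.mpr ⟨hxv, (mem_nbhd1 G x A x).mpr ⟨hxA, Or.inl rfl⟩⟩⟩
      · exact ⟨u, huT, Finset.mem_erase.mpr ⟨hxv, (mem_nbhd1 G u A x).mpr ⟨hxA, Or.inr hadj⟩⟩⟩
  have h2 : wsq w (nbhd G T A) ≤ w v ^ 2 + ∑ u ∈ T, (wsq w (nbhd1 G u A) - w v ^ 2) := by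
    calc wsq w (nbhd G T A)
        ≤ wsq w (insert v (T.biUnion fun u => (nbhd1 G u A).erase v)) := wsq_mono w hsub
      _ ≤ wsq w {v} + wsq w (T.biUnion fun u => (nbhd1 G u A).erase v) := by
          have : insert v (T.biUnion fun u => (nbhd1 G u A).erase v)
              = {v} ∪ T.biUnion fun u => (nbhd1 G u A).erase v := rfl
          rw [this]; exact wsq_union_le w _ _
      _ ≤ w v ^ 2 + ∑ u ∈ T, wsq w ((nbhd1 G u A).erase v) := by
          have := wsq_biUnion_le w T (fun u => (nbhd1 G u A).erase v)
          simp only [wsq, Finset.sum_singleton] at *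
          linarith
      _ = w v ^ 2 + ∑ u ∈ T, (wsq w (nbhd1 G u A) - w v ^ 2) := by
          congr 1
          apply Finset.sum_congr rfl
          intro u hu
          exact Finset.sum_erase_eq_sub (hvN u hu)
  have h3 : ∀ u ∈ T, wsq w (nbhd1 G u A) ≤ w v * wsum w (nbhd1 G u A) := by
    intro u hu
    rw [wsq, wsum, Finset.mul_sum]
    apply Finset.sum_le_sum
    intro x hx
    have := hmax u hu x hx
    nlinarith [(hw x).le]
  have h4 : ∀ u ∈ T, 2 * w v * w u - w v ^ 2 ≤ w u ^ 2 := by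
    intro u _
    nlinarith [sq_nonneg (w u - w v)]
  -- assemble
  have hchain : ∑ u ∈ T, (2 * w v * w u - w v ^ 2)
      ≤ w v ^ 2 + ∑ u ∈ T, (w v * wsum w (nbhd1 G u A) - w v ^ 2) := by
    calc ∑ u ∈ T, (2 * w v * w u - w v ^ 2) ≤ ∑ u ∈ T, (w u) ^ 2 :=
          Finset.sum_le_sum h4
      _ = wsq w T := rfl
      _ ≤ w v ^ 2 + ∑ u ∈ T, (wsq w (nbhd1 G u A) - w v ^ 2) := h1.trans h2
      _ ≤ w v ^ 2 + ∑ u ∈ T, (w v * wsum w (nbhd1 G u A) - w v ^ 2) := by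
          have := Finset.sum_le_sum (f := fun u => wsq w (nbhd1 G u A) - w v ^ 2)
            (g := fun u => w v * wsum w (nbhd1 G u A) - w v ^ 2)
            (s := T) (fun u hu => by linarith [h3 u hu])
          linarith
  have hsum : ∑ u ∈ T, charge G w A n u v
      = ∑ u ∈ T, w u - (∑ u ∈ T, wsum w (nbhd1 G u A)) / 2 := by
    rw [Finset.sum_div, ← Finset.sum_sub_distrib]
    apply Finset.sum_congr rfl
    intro u hu
    rw [charge, if_pos (hnv u hu)]
  rw [Finset.sum_sub_distrib, Finset.sum_sub_distrib, ← Finset.mul_sum, ← Finset.mul_sum]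
    at hchain
  rw [hsum]
  have hwv := hw v
  have h2S : 2 * (∑ u ∈ T, w u) - (∑ u ∈ T, wsum w (nbhd1 G u A)) ≤ w v := by
    have := mul_le_mul_of_nonneg_left (le_refl (1:ℝ)) (le_of_lt hwv)
    nlinarith [hchain]
  linarith

end
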